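/- Fix r ∈ (0,1), set ζ = r√(2/(2 + r)), ζ₁ = ζ·√(3r/8), and let c₀ > 0 be the unique positive real with sinh²(c₀) = 3r/2. Define ω : [0,∞) → ℝ by ω(η) = (3r/2)/sinh²(ζ₁η + c₀). Then: (i) ω(0) = 1; (ii) ω'(η) = −ζ·ω(η)·√(ω(η) + 3r/2) for all η ≥ 0; and (iii) ω(η) → 0 as η → ∞. In particular, ω is the right half-profile of the gmKdV peakon, and the even extension ω(|η|) gives the peakon profile. -/

import Mathlib

open Filter

/-- the explicit peakon half-profile `ω(η) = (3r/2)/sinh²(ζ₁η + c₀)`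
satisfies `ω(0) = 1`, the ODE `ω' = −ζ·ω·√(ω + 3r/2)` on `[0,∞)`, and `ω(η) → 0`
as `η → ∞`. -/
theorem gmKdV_peakon_explicit_profile
    (r ζ ζ₁ c₀ : ℝ) (hr : r ∈ Set.Ioo (0 : ℝ) 1)
    (hζ : ζ = r * Real.sqrt (2 / (2 + r)))
    (hζ₁ : ζ₁ = ζ * Real.sqrt (3 * r / 8))
    (hc₀pos : 0 < c₀) (hc₀ : Real.sinh c₀ ^ 2 = 3 * r / 2)
    (ω : ℝ → ℝ) (hω : ω = fun η => (3 * r / 2) / Real.sinh (ζ₁ * η + c₀) ^ 2) :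
    ω 0 = 1
    ∧ (∀ η : ℝ, 0 ≤ η →
        HasDerivAt ω (-ζ * ω η * Real.sqrt (ω η + 3 * r / 2)) η)
    ∧ Tendsto ω atTop (nhds 0) := by
  obtain ⟨hr0, hr1⟩ := hr
  have hA : (0:ℝ) < 3 * r / 2 := by linarith
  have h2r : (0:ℝ) < 2 + r := by linarith
  have hζpos : 0 < ζ := by
    rw [hζ]
    positivity
  have hζ₁pos : 0 < ζ₁ := by
    rw [hζ₁]
    positivity
  have hsinhc₀ : 0 < Real.sinh c₀ := Real.sinh_pos_iff.mpr hc₀pos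
  -- key: 2 * ζ₁ = ζ * sqrt (3r/2)
  have h4 : Real.sqrt 4 = 2 := by
    rw [show (4:ℝ) = 2 ^ 2 by norm_num, Real.sqrt_sq (by norm_num : (0:ℝ) ≤ 2)]
  have hkey : 2 * ζ₁ = ζ * Real.sqrt (3 * r / 2) := by
    rw [hζ₁, show (3 * r / 8 : ℝ) = (3 * r / 2) / 4 by ring,
      Real.sqrt_div hA.le, h4]
    ring
  refine ⟨?_, ?_, ?_⟩
  · simp [hω, hc₀]
    exact hr0.ne'
  · intro η _
    set u := ζ₁ * η + c₀ with hu
    have hupos : 0 < u := by positivity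
    have hS : 0 < Real.sinh u := Real.sinh_pos_iff.mpr hupos
    have hC : 0 < Real.cosh u := Real.cosh_pos u
    have hlin : HasDerivAt (fun η : ℝ => ζ₁ * η + c₀) ζ₁ η := by
      simpa using ((hasDerivAt_id η).const_mul ζ₁).add_const c₀
    have hsinh : HasDerivAt (fun η : ℝ => Real.sinh (ζ₁ * η + c₀))
        (Real.cosh u * ζ₁) η := ((Real.hasDerivAt_sinh u).comp η hlin :)
    have hsq : HasDerivAt (fun η : ℝ => Real.sinh (ζ₁ * η + c₀) ^ 2)
        ((2 : ℕ) * Real.sinh u ^ 1 * (Real.cosh u * ζ₁)) η := hsinh.pow 2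
    have hden : Real.sinh u ^ 2 ≠ 0 := by positivity
    have hdiv : HasDerivAt ω
        ((0 * Real.sinh u ^ 2 - (3 * r / 2) * ((2 : ℕ) * Real.sinh u ^ 1 * (Real.cosh u * ζ₁)))
          / (Real.sinh u ^ 2) ^ 2) η := by
      rw [hω]
      exact (hasDerivAt_const η (3 * r / 2)).div hsq hden
    convert hdiv using 1
    have hων : ω η = (3 * r / 2) / Real.sinh u ^ 2 := by rw [hω]
    have hsqrt : Real.sqrt (ω η + 3 * r / 2)
        = Real.sqrt (3 * r / 2) * Real.cosh u / Real.sinh u := by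
      have h1 : ω η + 3 * r / 2
          = (Real.sqrt (3 * r / 2) * Real.cosh u / Real.sinh u) ^ 2 := by
        rw [hων, div_pow, mul_pow, Real.sq_sqrt hA.le, Real.cosh_sq]
        field_simp
        ring
      rw [h1, Real.sqrt_sq (by positivity)]
    rw [hsqrt, hων]
    push_cast
    set s := Real.sqrt (3 * r / 2) with hs
    have hζA : ζ * s = 2 * ζ₁ := hkey.symm
    field_simp
    linear_combination (-3 * r * Real.cosh u) * hζA
  · rw [hω]
    have hlin_top : Tendsto (fun η : ℝ => ζ₁ * η + c₀) atTop atTop :=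
      tendsto_atTop_add_const_right _ c₀ (tendsto_id.const_mul_atTop hζ₁pos)
    have hsinh_mono : Tendsto Real.sinh atTop atTop := by
      apply tendsto_atTop_mono' atTop _ tendsto_id
      filter_upwards [eventually_ge_atTop (0:ℝ)] with x hx
      exact Real.self_le_sinh_iff.mpr hx
    have hsinh_top : Tendsto (fun η : ℝ => Real.sinh (ζ₁ * η + c₀)) atTop atTop :=
      hsinh_mono.comp hlin_top
    have hsq_top : Tendsto (fun η : ℝ => Real.sinh (ζ₁ * η + c₀) ^ 2) atTop atTop := by
      simpa [pow_two] using hsinh_top.atTop_mul_atTop₀ hsinh_top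
    exact tendsto_const_nhds.div_atTop hsq_top
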